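/- Let K be a field of characteristic zero. Let V₁ and V₂ be K-vector spaces of dimensions 2g₁ ≥ 2 and 2g₂ ≥ 2, equipped with nondegenerate alternating bilinear forms ω₁ and ω₂ respectively, and let V₃ be any finite-dimensional K-vector space. Let B be an alternating bilinear form on V = V₁ × V₂ × V₃. Suppose that for every Lagrangian subspace W₁ ⊆ V₁ and every Lagrangian subspace W₂ ⊆ V₂, the form B vanishes identically on the subspace W₁ × W₂ × V₃ (i.e., B(u,w) = 0 for all u, w ∈ W₁ × W₂ × V₃). Then every vector of the form (0,0,v₃) lies in the radical of B, i.e., B((0,0,v₃), w) = 0 for all v₃ ∈ V₃ and all w ∈ V. -/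

import Mathlib

open Module LinearMap

/-- An isotropic subspace of dimension `< g` of a nondegenerate alternating space of
dimension `2g` can be enlarged by one dimension, staying isotropic. -/
lemma isotropic_enlarge {K V : Type*} [Field K] [AddCommGroup V] [Module K V]
    [FiniteDimensional K V] (g : ℕ) (hd : Module.finrank K V = 2 * g)
    (ω : LinearMap.BilinForm K V) (hAlt : LinearMap.IsAlt ω)
    (hnd : ω.Nondegenerate)
    (W : Submodule K V) (hiso : ∀ u ∈ W, ∀ v ∈ W, ω u v = 0)
    (hlt : Module.finrank K W < g) :
    ∃ W' : Submodule K V, W ≤ W' ∧ Module.finrank K W' = Module.finrank K W + 1 ∧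
      ∀ u ∈ W', ∀ v ∈ W', ω u v = 0 := by
  have hrefl : ω.IsRefl := hAlt.isRefl
  have hWle : W ≤ ω.orthogonal W := fun v hv => by
    intro u hu
    exact hiso u hu v hv
  have hdimorth : Module.finrank K (ω.orthogonal W) =
      Module.finrank K V - Module.finrank K W :=
    LinearMap.BilinForm.finrank_orthogonal hnd W
  have hlt' : Module.finrank K W < Module.finrank K (ω.orthogonal W) := by
    rw [hdimorth, hd]; omega
  obtain ⟨v, hvorth, hvW⟩ : ∃ v ∈ ω.orthogonal W, v ∉ W := by
    by_contra h
    push_neg at h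
    have : ω.orthogonal W ≤ W := h
    have := Submodule.finrank_mono this
    omega
  refine ⟨W ⊔ Submodule.span K {v}, le_sup_left, ?_, ?_⟩
  · have h1 : Module.finrank K (Submodule.span K {v} : Submodule K V) = 1 := by
      apply finrank_span_singleton
      rintro rfl; exact hvW W.zero_mem
    have hinf : W ⊓ Submodule.span K {v} = ⊥ := by
      rw [Submodule.eq_bot_iff]
      intro x hx
      obtain ⟨hxW, hxv⟩ := Submodule.mem_inf.mp hx
      rw [Submodule.mem_span_singleton] at hxv
      obtain ⟨c, rfl⟩ := hxv
      rcases eq_or_ne c 0 with rfl | hc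
      · simp
      · exact absurd ((W.smul_mem_iff hc).mp hxW) hvW
    have := Submodule.finrank_sup_add_finrank_inf_eq W (Submodule.span K {v})
    rw [hinf, finrank_bot, h1] at this
    omega
  · rintro u hu w hw
    rw [Submodule.mem_sup] at hu hw
    obtain ⟨a, ha, b, hb, rfl⟩ := hu
    obtain ⟨c, hc, d, hd', rfl⟩ := hw
    rw [Submodule.mem_span_singleton] at hb hd'
    obtain ⟨s, rfl⟩ := hb
    obtain ⟨t, rfl⟩ := hd'
    have h1 : ω a c = 0 := hiso a ha c hc
    have h2 : ω a v = 0 := hvorth a ha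
    have h3 : ω v c = 0 := hrefl c v (hvorth c hc)
    have h4 : ω v v = 0 := hAlt v
    simp [map_add, map_smul, h1, h2, h3, h4]

/-- Every vector in a nondegenerate alternating space of dimension `2g ≥ 2` lies in
some Lagrangian subspace. -/
lemma exists_lagrangian {K V : Type*} [Field K] [AddCommGroup V] [Module K V]
    [FiniteDimensional K V] (g : ℕ) (hg : 1 ≤ g) (hd : Module.finrank K V = 2 * g)
    (ω : LinearMap.BilinForm K V) (hAlt : LinearMap.IsAlt ω)
    (hnd : ω.Nondegenerate) (x : V) :
    ∃ W : Submodule K V, x ∈ W ∧ Module.finrank K W = g ∧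
      ∀ u ∈ W, ∀ v ∈ W, ω u v = 0 := by
  -- enlarge any isotropic subspace of dim ≤ g to one of dim g
  suffices h : ∀ (k : ℕ) (W : Submodule K V), Module.finrank K W + k = g →
      (∀ u ∈ W, ∀ v ∈ W, ω u v = 0) →
      ∃ W' : Submodule K V, W ≤ W' ∧ Module.finrank K W' = g ∧
        ∀ u ∈ W', ∀ v ∈ W', ω u v = 0 by
    have hiso : ∀ u ∈ Submodule.span K {x}, ∀ v ∈ Submodule.span K {x}, ω u v = 0 := by
      intro u hu v hv
      rw [Submodule.mem_span_singleton] at hu hv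
      obtain ⟨s, rfl⟩ := hu
      obtain ⟨t, rfl⟩ := hv
      simp only [map_smul, LinearMap.smul_apply, hAlt x, smul_zero]
    have hle : Module.finrank K (Submodule.span K {x} : Submodule K V) ≤ g := by
      rcases eq_or_ne x 0 with rfl | hx
      · rw [Submodule.span_zero_singleton, finrank_bot]; omega
      · rw [finrank_span_singleton hx]; omega
    obtain ⟨W', hle', hdim, hiso'⟩ := h (g - Module.finrank K (Submodule.span K {x} : Submodule K V))
      (Submodule.span K {x}) (by omega) hiso
    exact ⟨W', hle' (Submodule.mem_span_singleton_self x), hdim, hiso'⟩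
  intro k
  induction k with
  | zero => intro W hdim hiso; exact ⟨W, le_rfl, by omega, hiso⟩
  | succ n ih =>
    intro W hdim hiso
    obtain ⟨W', hle, hdim', hiso'⟩ := isotropic_enlarge g hd ω hAlt hnd W hiso (by omega)
    obtain ⟨W'', hle', hdim'', hiso''⟩ := ih W' (by omega) hiso'
    exact ⟨W'', hle.trans hle', hdim'', hiso''⟩

/-- Case (1) in the proof of Lemma 1.12: let `(V₁, ω₁)` and `(V₂, ω₂)` be symplectic
vector spaces of dimensions `2g₁` and `2g₂` over a field of characteristic zero, `V₃`
any finite-dimensional vector space, and `B` an alternating bilinear form on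
`V = V₁ × V₂ × V₃`. If `B` vanishes identically on `W₁ × W₂ × V₃` for every pair of
Lagrangian subspaces `W₁ ⊆ V₁`, `W₂ ⊆ V₂`, then every vector `(0,0,v₃)` lies in the
radical of `B`. -/
theorem third_factor_in_radical
    {K V₁ V₂ V₃ : Type*} [Field K] [CharZero K]
    [AddCommGroup V₁] [Module K V₁] [FiniteDimensional K V₁]
    [AddCommGroup V₂] [Module K V₂] [FiniteDimensional K V₂]
    [AddCommGroup V₃] [Module K V₃] [FiniteDimensional K V₃]
    (g₁ g₂ : ℕ) (hg₁ : 1 ≤ g₁) (hg₂ : 1 ≤ g₂)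
    (hd₁ : Module.finrank K V₁ = 2 * g₁) (hd₂ : Module.finrank K V₂ = 2 * g₂)
    (ω₁ : LinearMap.BilinForm K V₁) (ω₂ : LinearMap.BilinForm K V₂)
    (hAlt₁ : LinearMap.IsAlt ω₁) (hAlt₂ : LinearMap.IsAlt ω₂)
    (hnd₁ : ∀ v : V₁, (∀ w : V₁, ω₁ v w = 0) → v = 0)
    (hnd₂ : ∀ v : V₂, (∀ w : V₂, ω₂ v w = 0) → v = 0)
    (B : LinearMap.BilinForm K (V₁ × V₂ × V₃)) (hAltB : LinearMap.IsAlt B)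
    (hvan : ∀ (W₁ : Submodule K V₁) (W₂ : Submodule K V₂),
      Module.finrank K W₁ = g₁ → (∀ u ∈ W₁, ∀ v ∈ W₁, ω₁ u v = 0) →
      Module.finrank K W₂ = g₂ → (∀ u ∈ W₂, ∀ v ∈ W₂, ω₂ u v = 0) →
      ∀ u w : V₁ × V₂ × V₃, u.1 ∈ W₁ → u.2.1 ∈ W₂ → w.1 ∈ W₁ → w.2.1 ∈ W₂ →
        B u w = 0) :
    ∀ (v₃ : V₃) (w : V₁ × V₂ × V₃), B (0, 0, v₃) w = 0 := by
  intro v₃ w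
  have hnd₁' : ω₁.Nondegenerate := hAlt₁.isRefl.nondegenerate_iff_separatingLeft.mpr fun v hv => hnd₁ v hv
  have hnd₂' : ω₂.Nondegenerate := hAlt₂.isRefl.nondegenerate_iff_separatingLeft.mpr fun v hv => hnd₂ v hv
  obtain ⟨W₁, hxW₁, hdW₁, hisoW₁⟩ := exists_lagrangian g₁ hg₁ hd₁ ω₁ hAlt₁ hnd₁' w.1
  obtain ⟨W₂, hxW₂, hdW₂, hisoW₂⟩ := exists_lagrangian g₂ hg₂ hd₂ ω₂ hAlt₂ hnd₂' w.2.1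
  exact hvan W₁ W₂ hdW₁ hisoW₁ hdW₂ hisoW₂ (0, 0, v₃) w W₁.zero_mem W₂.zero_mem hxW₁ hxW₂
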